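/- Let T be a simplicial tree in which every vertex has at most countably many neighbors, let a group G act on T by graph automorphisms with finitely many orbits of vertices, and let R_0 be a G-invariant decoration of T with neighbor refinement sequence (R_i); this sequence is eventually constant, and we let R denote its eventual value. Then for all vertices v and w of T the following are equivalent: (i) R v w; (ii) there exists a graph automorphism χ of T with χ(v) = w such that R_0 u (χ u) holds for every vertex u; (iii) there exists a graph automorphism χ of T with χ(v) = w such that R u (χ u) holds for every vertex u. -/

import Mathlib

/-- The neighbor refinement sequence of a relation `R0` on the vertices of a graph `G`. -/
def nbhdRefine {V : Type*} (G : SimpleGraph V) (R0 : V → V → Prop) : ℕ → V → V → Prop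
  | 0 => R0
  | (i + 1) => fun v w => R0 v w ∧ ∀ u : V,
      {x : V | G.Adj v x ∧ nbhdRefine G R0 i x u}.encard =
      {x : V | G.Adj w x ∧ nbhdRefine G R0 i x u}.encard

namespace NRTreeAux

open Set

variable {V : Type*}

lemma exists_bijOn_of_encard_eq {S T : Set V} (hS : S.Countable) (hT : T.Countable)
    (h : S.encard = T.encard) : ∃ f : V → V, Set.BijOn f S T := by
  classical
  have hne : Nonempty (S ≃ T) := by
    rcases S.finite_or_infinite with hfin | hinf
    · have hTfin : T.Finite := by rwa [← Set.encard_lt_top_iff, ← h, Set.encard_lt_top_iff]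
      haveI := hfin.to_subtype
      haveI := hTfin.to_subtype
      exact Finite.card_eq.mp (by
        rw [Nat.card_coe_set_eq, Nat.card_coe_set_eq, Set.ncard_def, Set.ncard_def, h])
    · have hTinf : T.Infinite := by
        rw [← Set.encard_eq_top_iff] at hinf ⊢; rw [← h]; exact hinf
      haveI := hS.to_subtype
      haveI := hT.to_subtype
      haveI := hinf.to_subtype
      haveI := hTinf.to_subtype
      exact Cardinal.eq.mp (by rw [Cardinal.mk_eq_aleph0, Cardinal.mk_eq_aleph0])
  obtain ⟨e⟩ := hne
  refine ⟨fun x => if hx : x ∈ S then (e ⟨x, hx⟩ : V) else x, ?_, ?_, ?_⟩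
  · intro x hx
    simp only [dif_pos hx]
    exact (e ⟨x, hx⟩).2
  · intro x hx y hy hxy
    simp only [dif_pos hx, dif_pos hy] at hxy
    have := e.injective (Subtype.ext hxy)
    exact congrArg Subtype.val this
  · intro y hy
    refine ⟨(e.symm ⟨y, hy⟩ : V), (e.symm ⟨y, hy⟩).2, ?_⟩
    simp only [dif_pos (e.symm ⟨y, hy⟩).2]
    rw [Subtype.coe_eta]
    rw [e.apply_symm_apply]

lemma exists_bijOn_classwise {R : V → V → Prop} (hR : Equivalence R)
    {A B : Set V} (hA : A.Countable) (hB : B.Countable)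
    (h : ∀ u : V, (A ∩ {x | R x u}).encard = (B ∩ {x | R x u}).encard) :
    ∃ f : V → V, Set.BijOn f A B ∧ ∀ x ∈ A, R x (f x) := by
  classical
  let s : Setoid V := ⟨R, hR⟩
  let rep : V → V := fun x => (Quotient.mk s x).out
  have hrep1 : ∀ x, R x (rep x) := fun x => hR.symm (Quotient.mk_out (s := s) x)
  have hrep2 : ∀ x y, R x y → rep x = rep y := fun x y hxy =>
    congrArg Quotient.out (Quotient.sound (hxy : s x y))
  have hg : ∀ u : V, ∃ g : V → V, Set.BijOn g (A ∩ {x | R x u}) (B ∩ {x | R x u}) :=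
    fun u => exists_bijOn_of_encard_eq (hA.mono inter_subset_left)
      (hB.mono inter_subset_left) (h u)
  choose g hg using hg
  refine ⟨fun x => g (rep x) x, ⟨?_, ?_, ?_⟩, ?_⟩
  · intro x hx
    exact ((hg (rep x)).mapsTo ⟨hx, hrep1 x⟩).1
  · intro x hx y hy hxy
    have hRx : R x (g (rep x) x) := by
      have := ((hg (rep x)).mapsTo ⟨hx, hrep1 x⟩).2
      exact hR.trans (hrep1 x) (hR.symm this)
    have hRy : R y (g (rep y) y) := by
      have := ((hg (rep y)).mapsTo ⟨hy, hrep1 y⟩).2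
      exact hR.trans (hrep1 y) (hR.symm this)
    simp only at hxy
    have hxy' : R x y := hR.trans hRx (by rw [hxy]; exact hR.symm hRy)
    have hr : rep x = rep y := hrep2 _ _ hxy'
    refine (hg (rep x)).injOn ⟨hx, hrep1 x⟩ ⟨hy, hr ▸ hrep1 y⟩ ?_
    rw [hxy, hr]
  · intro y hy
    obtain ⟨x, hx, hgx⟩ := (hg (rep y)).surjOn ⟨hy, hrep1 y⟩
    have hrxy : rep x = rep y := hrep2 _ _ (hR.trans hx.2 (hR.symm (hrep1 y)))
    exact ⟨x, hx.1, by simp only; rw [hrxy, hgx]⟩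
  · intro x hx
    have := ((hg (rep x)).mapsTo ⟨hx, hrep1 x⟩).2
    exact hR.trans (hrep1 x) (hR.symm this)

variable {G : SimpleGraph V} {R0 : V → V → Prop}

lemma nbhdRefine_equivalence (hR0 : Equivalence R0) :
    ∀ i, Equivalence (nbhdRefine G R0 i) := by
  intro i
  induction i with
  | zero => exact hR0
  | succ i ih =>
    constructor
    · exact fun x => ⟨hR0.refl x, fun u => rfl⟩
    · exact fun h => ⟨hR0.symm h.1, fun u => (h.2 u).symm⟩
    · exact fun h h' => ⟨hR0.trans h.1 h'.1, fun u => (h.2 u).trans (h'.2 u)⟩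

lemma nbhdRefine_to_R0 {i : ℕ} {v w : V} (h : nbhdRefine G R0 i v w) : R0 v w := by
  cases i with
  | zero => exact h
  | succ i => exact h.1

lemma nbhdRefine_aut (hR0 : Equivalence R0) (χ : G ≃g G) (h0 : ∀ u, R0 u (χ u)) :
    ∀ i u, nbhdRefine G R0 i u (χ u) := by
  intro i
  induction i with
  | zero => exact h0
  | succ i ih =>
    intro u
    refine ⟨h0 u, fun u0 => ?_⟩
    have heq : Equivalence (nbhdRefine G R0 i) := nbhdRefine_equivalence hR0 i
    have himg : {x : V | G.Adj (χ u) x ∧ nbhdRefine G R0 i x u0} =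
        χ '' {x : V | G.Adj u x ∧ nbhdRefine G R0 i x u0} := by
      ext y
      constructor
      · rintro ⟨hadj, hrel⟩
        refine ⟨χ.symm y, ⟨?_, ?_⟩, by simp⟩
        · have : G.Adj (χ u) (χ (χ.symm y)) := by simpa using hadj
          exact χ.map_adj_iff.mp this
        · have h1 : nbhdRefine G R0 i (χ.symm y) (χ (χ.symm y)) := ih (χ.symm y)
          simp only [RelIso.apply_symm_apply] at h1
          exact heq.trans h1 hrel
      · rintro ⟨x, ⟨hadj, hrel⟩, rfl⟩
        exact ⟨χ.map_adj_iff.mpr hadj, heq.trans (heq.symm (ih x)) hrel⟩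
    rw [himg, Function.Injective.encard_image (χ.injective)]

lemma tree_parent_exists (hconn : G.Connected) (r u : V) :
    ∃ p : V, (u ≠ r → G.Adj u p ∧ G.dist r p + 1 = G.dist r u) ∧ (u = r → p = r) := by
  classical
  by_cases h : u = r
  · exact ⟨r, fun h' => absurd h h', fun _ => rfl⟩
  · obtain ⟨p0, hp0⟩ := hconn.exists_walk_length_eq_dist r u
    have hd : p0.reverse.length = G.dist r u := by
      rw [SimpleGraph.Walk.length_reverse]; exact hp0
    cases hq : p0.reverse with
    | nil => exact absurd rfl h
    | @cons _ x _ hadj q =>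
      refine ⟨x, fun _ => ⟨hadj, ?_⟩, fun h' => absurd h' h⟩
      have hlen : q.length + 1 = G.dist r u := by
        rw [← hd, hq]; simp [SimpleGraph.Walk.length_cons]
      have h1 : G.dist r x ≤ q.length := by
        have := SimpleGraph.dist_le q.reverse
        rwa [SimpleGraph.Walk.length_reverse] at this
      have h2 : G.dist r u ≤ G.dist r x + 1 := by
        have := hconn.dist_triangle (u := r) (v := x) (w := u)
        have hxu : G.dist x u = 1 := SimpleGraph.dist_eq_one_iff_adj.mpr hadj.symm
        omega
      omega

lemma concat_isPath {r a u : V} (P : G.Walk r a) (hP : P.IsPath) (hu : u ∉ P.support)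
    (hadj : G.Adj a u) : (P.concat hadj).IsPath := by
  rw [SimpleGraph.Walk.isPath_def, SimpleGraph.Walk.support_concat]
  rw [List.nodup_append']
  refine ⟨hP.support_nodup, List.nodup_singleton u, ?_⟩
  intro x hx hx'
  rw [List.mem_singleton] at hx'
  subst hx'
  exact hu hx

lemma tree_parent_unique (hT : G.IsTree) (r u p p' : V)
    (h1 : G.Adj u p) (h2 : G.Adj u p') (hd1 : G.dist r p + 1 = G.dist r u)
    (hd2 : G.dist r p' + 1 = G.dist r u) : p = p' := by
  classical
  have hconn := hT.isConnected
  have build : ∀ z : V, G.Adj u z → G.dist r z + 1 = G.dist r u →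
      ∃ Q : G.Walk r u, Q.IsPath ∧ ∃ (P : G.Walk r z) (hadj : G.Adj z u), Q = P.concat hadj := by
    intro z hz hdz
    obtain ⟨P, hPpath, hPlen⟩ := hconn.exists_path_of_dist r z
    have hu : u ∉ P.support := by
      intro hmem
      have h3 : G.dist r u ≤ (P.takeUntil u hmem).length := SimpleGraph.dist_le _
      have h4 : (P.takeUntil u hmem).length ≤ P.length :=
        SimpleGraph.Walk.length_takeUntil_le P hmem
      omega
    exact ⟨P.concat hz.symm, concat_isPath P hPpath hu hz.symm, P, hz.symm, rfl⟩
  obtain ⟨Q, hQ, P, hadj, rfl⟩ := build p h1 hd1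
  obtain ⟨Q', hQ', P', hadj', rfl⟩ := build p' h2 hd2
  have : (⟨P.concat hadj, hQ⟩ : G.Path r u) = ⟨P'.concat hadj', hQ'⟩ :=
    hT.IsAcyclic.path_unique _ _
  have heq : P.concat hadj = P'.concat hadj' := congrArg Subtype.val this
  obtain ⟨hv, -⟩ := SimpleGraph.Walk.concat_inj heq
  exact hv

lemma tree_level_adj (hT : G.IsTree) (r a b : V) (hadj : G.Adj a b) :
    G.dist r b = G.dist r a + 1 ∨ G.dist r b + 1 = G.dist r a := by
  classical
  have hconn := hT.isConnected
  have hab : G.dist a b = 1 := SimpleGraph.dist_eq_one_iff_adj.mpr hadj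
  have t1 : G.dist r b ≤ G.dist r a + 1 := by
    have := hconn.dist_triangle (u := r) (v := a) (w := b); omega
  have t2 : G.dist r a ≤ G.dist r b + 1 := by
    have := hconn.dist_triangle (u := r) (v := b) (w := a)
    have : G.dist b a = 1 := SimpleGraph.dist_eq_one_iff_adj.mpr hadj.symm
    have := hconn.dist_triangle (u := r) (v := b) (w := a)
    omega
  have hba : G.dist b a = 1 := SimpleGraph.dist_eq_one_iff_adj.mpr hadj.symm
  have hne : G.dist r b ≠ G.dist r a := by
    intro heq
    set d := G.dist r a with hd
    have hdpos : 0 < d := by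
      rcases Nat.eq_zero_or_pos d with h0 | h0
      · have ha : a = r := by
          have hc : G.dist a r = 0 := by rw [SimpleGraph.dist_comm]; omega
          exact hconn.dist_eq_zero_iff.mp hc
        have hb : b = r := by
          have hc : G.dist b r = 0 := by rw [SimpleGraph.dist_comm]; omega
          exact hconn.dist_eq_zero_iff.mp hc
        exact absurd (ha.trans hb.symm) hadj.ne
      · exact h0
    obtain ⟨P, hPpath, hPlen⟩ := hconn.exists_path_of_dist r a
    have hbP : b ∉ P.support := by
      intro hmem
      have h3 : G.dist r b ≤ (P.takeUntil b hmem).length := SimpleGraph.dist_le _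
      have h5 := congrArg SimpleGraph.Walk.length (P.take_spec hmem)
      rw [SimpleGraph.Walk.length_append] at h5
      have h6 : G.dist b a ≤ (P.dropUntil b hmem).length := SimpleGraph.dist_le _
      omega
    have hQ : (P.concat hadj).IsPath := concat_isPath P hPpath hbP hadj
    obtain ⟨P', hP'path, hP'len⟩ := hconn.exists_path_of_dist r b
    have : (⟨P.concat hadj, hQ⟩ : G.Path r b) = ⟨P', hP'path⟩ :=
      hT.IsAcyclic.path_unique _ _
    have hw : P.concat hadj = P' := congrArg Subtype.val this
    have hlen := congrArg SimpleGraph.Walk.length hw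
    rw [SimpleGraph.Walk.length_concat] at hlen
    omega
  omega

lemma exists_matching (hcount : ∀ v : V, (G.neighborSet v).Countable)
    {R : V → V → Prop} (hR : Equivalence R)
    (hstable : ∀ a b, R a b → ∀ u,
      {x | G.Adj a x ∧ R x u}.encard = {x | G.Adj b x ∧ R x u}.encard)
    (a b p q : V) :
    ∃ f : V → V, R a b → R p q → (G.Adj a p ↔ G.Adj b q) →
      (Set.BijOn f (G.neighborSet a \ {p}) (G.neighborSet b \ {q}) ∧
       ∀ x ∈ G.neighborSet a \ {p}, R x (f x)) := by
  classical
  by_cases H : R a b ∧ R p q ∧ (G.Adj a p ↔ G.Adj b q)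
  · obtain ⟨h1, h2, h3⟩ := H
    have key : ∀ u : V, ((G.neighborSet a \ {p}) ∩ {x | R x u}).encard =
        ((G.neighborSet b \ {q}) ∩ {x | R x u}).encard := by
      intro u
      have hset1 : (G.neighborSet a \ {p}) ∩ {x | R x u} = {x | G.Adj a x ∧ R x u} \ {p} := by
        ext x
        simp only [Set.mem_inter_iff, Set.mem_diff, SimpleGraph.mem_neighborSet,
          Set.mem_singleton_iff, Set.mem_setOf_eq]
        tauto
      have hset2 : (G.neighborSet b \ {q}) ∩ {x | R x u} = {x | G.Adj b x ∧ R x u} \ {q} := by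
        ext x
        simp only [Set.mem_inter_iff, Set.mem_diff, SimpleGraph.mem_neighborSet,
          Set.mem_singleton_iff, Set.mem_setOf_eq]
        tauto
      rw [hset1, hset2]
      have hbase := hstable a b h1 u
      by_cases hp : G.Adj a p ∧ R p u
      · have hq : G.Adj b q ∧ R q u := ⟨h3.mp hp.1, hR.trans (hR.symm h2) hp.2⟩
        have e1 := Set.encard_diff_singleton_add_one
          (show p ∈ {x | G.Adj a x ∧ R x u} from hp)
        have e2 := Set.encard_diff_singleton_add_one
          (show q ∈ {x | G.Adj b x ∧ R x u} from hq)
        exact WithTop.add_right_cancel (by exact ENat.one_ne_top) (e1.trans (hbase.trans e2.symm))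
      · have hq : ¬(G.Adj b q ∧ R q u) := fun hc => hp ⟨h3.mpr hc.1, hR.trans h2 hc.2⟩
        rw [Set.diff_singleton_eq_self (show p ∉ {x | G.Adj a x ∧ R x u} from hp),
          Set.diff_singleton_eq_self (show q ∉ {x | G.Adj b x ∧ R x u} from hq)]
        exact hbase
    obtain ⟨f, hf1, hf2⟩ := exists_bijOn_classwise hR
      ((hcount a).mono Set.diff_subset) ((hcount b).mono Set.diff_subset) key
    exact ⟨f, fun _ _ _ => ⟨hf1, hf2⟩⟩
  · exact ⟨id, fun h1 h2 h3 => absurd ⟨h1, h2, h3⟩ H⟩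

lemma exists_aut (hT : G.IsTree) (hcount : ∀ v : V, (G.neighborSet v).Countable)
    {R : V → V → Prop} (hR : Equivalence R)
    (hstable : ∀ a b, R a b → ∀ u,
      {x | G.Adj a x ∧ R x u}.encard = {x | G.Adj b x ∧ R x u}.encard)
    {v w : V} (hvw : R v w) :
    ∃ χ : G ≃g G, χ v = w ∧ ∀ u, R u (χ u) := by
  classical
  have hconn := hT.isConnected
  choose pr hpr using fun r u => tree_parent_exists (G := G) hconn r u
  choose Mf hMf using fun a b p q => exists_matching (G := G) hcount hR hstable a b p q
  obtain ⟨F, hF0, hFS⟩ : ∃ F : ℕ → V → V,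
      (∀ u, F 0 u = if u = v then w else u) ∧
      (∀ n u, F (n+1) u = if G.dist v u ≤ n then F n u else
        Mf (pr v u) (F n (pr v u)) (pr v (pr v u)) (F n (pr v (pr v u))) u) :=
    ⟨fun n => Nat.rec (fun u => if u = v then w else u)
        (fun n Fn u => if G.dist v u ≤ n then Fn u else
          Mf (pr v u) (Fn (pr v u)) (pr v (pr v u)) (Fn (pr v (pr v u))) u) n,
      fun _ => rfl, fun _ _ => rfl⟩
  set χ : V → V := fun u => F (G.dist v u) u with hχdef
  have hχv : χ v = w := by
    show F (G.dist v v) v = w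
    rw [SimpleGraph.dist_self, hF0]
    simp
  have hdist0 : ∀ u, G.dist v u = 0 → u = v :=
    fun u h => (hconn.dist_eq_zero_iff.mp h).symm
  have hdist0w : ∀ y, G.dist w y = 0 → y = w :=
    fun y h => (hconn.dist_eq_zero_iff.mp h).symm
  have hFstab : ∀ n u, G.dist v u ≤ n → F n u = χ u := by
    intro n
    induction n with
    | zero =>
      intro u hu
      have h0 : G.dist v u = 0 := Nat.le_zero.mp hu
      show F 0 u = F (G.dist v u) u
      rw [h0]
    | succ n ih =>
      intro u hu
      rcases Nat.lt_or_ge (G.dist v u) (n+1) with h | h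
      · rw [hFS, if_pos (Nat.lt_succ_iff.mp h)]
        exact ih u (Nat.lt_succ_iff.mp h)
      · have hd : G.dist v u = n + 1 := le_antisymm hu h
        show F (n+1) u = F (G.dist v u) u
        rw [hd]
  have hprv : ∀ u, u ≠ v → G.Adj u (pr v u) ∧ G.dist v (pr v u) + 1 = G.dist v u :=
    fun u hu => (hpr v u).1 hu
  have hprw : ∀ y, y ≠ w → G.Adj y (pr w y) ∧ G.dist w (pr w y) + 1 = G.dist w y :=
    fun y hy => (hpr w y).1 hy
  have hprvv : pr v v = v := (hpr v v).2 rfl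
  have hχstep : ∀ u, u ≠ v →
      χ u = Mf (pr v u) (χ (pr v u)) (pr v (pr v u)) (χ (pr v (pr v u))) u := by
    intro u hu
    obtain ⟨hadj, hdp⟩ := hprv u hu
    have hdu : G.dist v u ≠ 0 := fun h0 => hu (hdist0 u h0)
    obtain ⟨n, hn⟩ : ∃ n, G.dist v u = n + 1 := ⟨G.dist v u - 1, by omega⟩
    have h1 : χ u = F (n+1) u := by
      show F (G.dist v u) u = _
      rw [hn]
    have hd2 : G.dist v (pr v (pr v u)) ≤ n := by
      by_cases hp : pr v u = v
      · rw [hp, hprvv, SimpleGraph.dist_self]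
        exact Nat.zero_le n
      · have := (hprv (pr v u) hp).2
        omega
    rw [h1, hFS n u, if_neg (by omega), hFstab n (pr v u) (by omega), hFstab n _ hd2]
  -- the main induction on levels
  have key : ∀ n : ℕ,
      (∀ u, G.dist v u = n → G.dist w (χ u) = n ∧ R u (χ u) ∧
        (u ≠ v → G.Adj (χ (pr v u)) (χ u) ∧ pr w (χ u) = χ (pr v u))) ∧
      (∀ u₁ u₂, G.dist v u₁ = n → G.dist v u₂ = n → χ u₁ = χ u₂ → u₁ = u₂) ∧
      (∀ y, G.dist w y = n → ∃ u, G.dist v u = n ∧ χ u = y) := by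
    intro n
    induction n using Nat.strong_induction_on with
    | _ n IH =>
    match n with
    | 0 =>
      refine ⟨?_, ?_, ?_⟩
      · intro u hu
        have huv : u = v := hdist0 u hu
        subst huv
        rw [hχv]
        exact ⟨SimpleGraph.dist_self, hvw, fun h => absurd rfl h⟩
      · intro u₁ u₂ h1 h2 _
        rw [hdist0 u₁ h1, hdist0 u₂ h2]
      · intro y hy
        exact ⟨v, SimpleGraph.dist_self, by rw [hχv, hdist0w y hy]⟩
    | (m+1) =>
      have low : ∀ x, G.dist v x ≤ m → (G.dist w (χ x) = G.dist v x ∧ R x (χ x) ∧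
          (x ≠ v → G.Adj (χ (pr v x)) (χ x) ∧ pr w (χ x) = χ (pr v x))) := by
        intro x hx
        exact (IH (G.dist v x) (by omega)).1 x rfl
      -- per-parent setup
      have setup : ∀ p, G.dist v p = m →
          ((Set.BijOn (Mf p (χ p) (pr v p) (χ (pr v p)))
              (G.neighborSet p \ {pr v p}) (G.neighborSet (χ p) \ {χ (pr v p)}) ∧
            ∀ x ∈ G.neighborSet p \ {pr v p}, R x (Mf p (χ p) (pr v p) (χ (pr v p)) x)) ∧
          (∀ x, x ∈ G.neighborSet p \ {pr v p} ↔ (G.Adj p x ∧ G.dist v x = m + 1)) ∧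
          (∀ y, y ∈ G.neighborSet (χ p) \ {χ (pr v p)} ↔
            (G.Adj (χ p) y ∧ G.dist w y = m + 1))) := by
        intro p hp
        have hlowp := low p (le_of_eq hp)
        have hRp : R p (χ p) := hlowp.2.1
        have hwp : G.dist w (χ p) = m := by rw [hlowp.1, hp]
        by_cases hpv : p = v
        · -- p = v (root); then m = 0.  subst eliminates v, root becomes p
          subst hpv
          have hm0 : m = 0 := by rw [← hp, SimpleGraph.dist_self]
          subst hm0
          have hMfc := hMf p (χ p) (pr p p) (χ (pr p p)) hRp
            (by rw [hprvv]; exact hRp)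
            (by
              rw [hprvv, hχv]
              exact ⟨fun h => absurd h (G.loopless.irrefl p), fun h => absurd h (G.loopless.irrefl w)⟩)
          refine ⟨hMfc, ?_, ?_⟩
          · intro x
            rw [Set.mem_diff, SimpleGraph.mem_neighborSet, hprvv, Set.mem_singleton_iff]
            constructor
            · rintro ⟨hadj, hxne⟩
              have h1 : G.dist p x = 1 := SimpleGraph.dist_eq_one_iff_adj.mpr hadj
              exact ⟨hadj, by omega⟩
            · rintro ⟨hadj, hdx⟩
              exact ⟨hadj, hadj.ne'⟩
          · intro y
            rw [Set.mem_diff, SimpleGraph.mem_neighborSet, hprvv, hχv, Set.mem_singleton_iff]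
            constructor
            · rintro ⟨hadj, hyne⟩
              have h1 : G.dist w y = 1 := SimpleGraph.dist_eq_one_iff_adj.mpr hadj
              exact ⟨hadj, by omega⟩
            · rintro ⟨hadj, hdy⟩
              exact ⟨hadj, hadj.ne'⟩
        · -- p ≠ v, so m ≥ 1
          have hmpos : 1 ≤ m := by
            rcases Nat.eq_zero_or_pos m with h0 | h0
            · exact absurd (hdist0 p (by omega)) hpv
            · exact h0
          obtain ⟨hadjp, hdistp⟩ := hprv p hpv
          have hlowpr := low (pr v p) (by omega)
          have hRpr : R (pr v p) (χ (pr v p)) := hlowpr.2.1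
          have hadjχ : G.Adj (χ (pr v p)) (χ p) := (hlowp.2.2 hpv).1
          have hcompat : pr w (χ p) = χ (pr v p) := (hlowp.2.2 hpv).2
          have hχpne : χ p ≠ w := fun h => by rw [h, SimpleGraph.dist_self] at hwp; omega
          obtain ⟨hadjwp, hdistwp⟩ := hprw (χ p) hχpne
          have hMfc := hMf p (χ p) (pr v p) (χ (pr v p)) hRp hRpr
            ⟨fun _ => hadjχ.symm, fun _ => hadjp⟩
          refine ⟨hMfc, ?_, ?_⟩
          · intro x
            constructor
            · rintro ⟨hadj, hxne⟩
              rw [SimpleGraph.mem_neighborSet] at hadj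
              refine ⟨hadj, ?_⟩
              rcases tree_level_adj hT v p x hadj with h | h
              · omega
              · exfalso
                apply hxne
                rw [Set.mem_singleton_iff]
                exact tree_parent_unique hT v p x (pr v p) hadj hadjp (by omega) hdistp
            · rintro ⟨hadj, hdx⟩
              refine ⟨hadj, ?_⟩
              intro hx
              rw [Set.mem_singleton_iff] at hx
              subst hx
              have := hlowpr.1
              omega
          · intro y
            constructor
            · rintro ⟨hadj, hyne⟩
              rw [SimpleGraph.mem_neighborSet] at hadj
              refine ⟨hadj, ?_⟩
              rcases tree_level_adj hT w (χ p) y hadj with h | h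
              · omega
              · exfalso
                apply hyne
                rw [Set.mem_singleton_iff]
                rw [← hcompat]
                exact tree_parent_unique hT w (χ p) y (pr w (χ p)) hadj hadjwp (by omega)
                  (by omega)
            · rintro ⟨hadj, hdy⟩
              refine ⟨hadj, ?_⟩
              intro hy
              rw [Set.mem_singleton_iff] at hy
              subst hy
              have h1 : G.dist w (χ (pr v p)) = G.dist v (pr v p) := hlowpr.1
              omega
      -- pointwise statement at level m+1
      have ptw : ∀ u, G.dist v u = m + 1 → G.dist w (χ u) = m + 1 ∧ R u (χ u) ∧
          (G.Adj (χ (pr v u)) (χ u) ∧ pr w (χ u) = χ (pr v u)) := by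
        intro u hu
        have huv : u ≠ v := fun h => by rw [h, SimpleGraph.dist_self] at hu; omega
        obtain ⟨hadju, hdistu⟩ := hprv u huv
        have hdp : G.dist v (pr v u) = m := by omega
        obtain ⟨⟨hbij, hrel⟩, hSp, hTp⟩ := setup (pr v u) hdp
        have huSp : u ∈ G.neighborSet (pr v u) \ {pr v (pr v u)} :=
          (hSp u).mpr ⟨hadju.symm, hu⟩
        have hχu : χ u = Mf (pr v u) (χ (pr v u)) (pr v (pr v u)) (χ (pr v (pr v u))) u :=
          hχstep u huv
        have hmem : χ u ∈ G.neighborSet (χ (pr v u)) \ {χ (pr v (pr v u))} := by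
          rw [hχu]
          exact hbij.mapsTo huSp
        obtain ⟨hadjy, hdy⟩ := (hTp (χ u)).mp hmem
        have hRu : R u (χ u) := by
          rw [hχu]
          exact hrel u huSp
        refine ⟨hdy, hRu, hadjy, ?_⟩
        have hχune : χ u ≠ w := fun h => by rw [h, SimpleGraph.dist_self] at hdy; omega
        obtain ⟨hadjwu, hdistwu⟩ := hprw (χ u) hχune
        have hwpr : G.dist w (χ (pr v u)) = m := by
          rw [(low (pr v u) (le_of_eq hdp)).1, hdp]
        exact (tree_parent_unique hT w (χ u) (pr w (χ u)) (χ (pr v u)) hadjwu hadjy.symm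
          (by omega) (by omega)).symm ▸ rfl
      refine ⟨fun u hu => ⟨(ptw u hu).1, (ptw u hu).2.1, fun _ => (ptw u hu).2.2⟩, ?_, ?_⟩
      · -- injectivity at level m+1
        intro u₁ u₂ h1 h2 hχeq
        have hp1 := ptw u₁ h1
        have hp2 := ptw u₂ h2
        have huv1 : u₁ ≠ v := fun h => by rw [h, SimpleGraph.dist_self] at h1; omega
        have huv2 : u₂ ≠ v := fun h => by rw [h, SimpleGraph.dist_self] at h2; omega
        have hpreq : χ (pr v u₁) = χ (pr v u₂) := by
          rw [← hp1.2.2.2, ← hp2.2.2.2, hχeq]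
        have hd1 : G.dist v (pr v u₁) = m := by have := (hprv u₁ huv1).2; omega
        have hd2 : G.dist v (pr v u₂) = m := by have := (hprv u₂ huv2).2; omega
        have hpeq : pr v u₁ = pr v u₂ := (IH m (by omega)).2.1 _ _ hd1 hd2 hpreq
        obtain ⟨⟨hbij, _⟩, hSp, _⟩ := setup (pr v u₁) hd1
        have hu1Sp : u₁ ∈ G.neighborSet (pr v u₁) \ {pr v (pr v u₁)} :=
          (hSp u₁).mpr ⟨(hprv u₁ huv1).1.symm, h1⟩
        have hu2Sp : u₂ ∈ G.neighborSet (pr v u₁) \ {pr v (pr v u₁)} :=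
          (hSp u₂).mpr ⟨by rw [hpeq]; exact (hprv u₂ huv2).1.symm, h2⟩
        refine hbij.injOn hu1Sp hu2Sp ?_
        have e1 := hχstep u₁ huv1
        have e2 := hχstep u₂ huv2
        rw [← hpeq] at e2
        rw [← e1, ← e2, hχeq]
      · -- surjectivity at level m+1
        intro y hy
        have hyw : y ≠ w := fun h => by rw [h, SimpleGraph.dist_self] at hy; omega
        obtain ⟨hadjy, hdisty⟩ := hprw y hyw
        have hdq : G.dist w (pr w y) = m := by omega
        obtain ⟨p, hdp, hχp⟩ := (IH m (by omega)).2.2 (pr w y) hdq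
        obtain ⟨⟨hbij, _⟩, hSp, hTp⟩ := setup p hdp
        have hyTp : y ∈ G.neighborSet (χ p) \ {χ (pr v p)} := by
          refine (hTp y).mpr ⟨?_, hy⟩
          rw [hχp]
          exact hadjy.symm
        obtain ⟨x, hxSp, hfx⟩ := hbij.surjOn hyTp
        obtain ⟨hadjx, hdx⟩ := (hSp x).mp hxSp
        have hxv : x ≠ v := fun h => by rw [h, SimpleGraph.dist_self] at hdx; omega
        have hprx : pr v x = p :=
          tree_parent_unique hT v x (pr v x) p (hprv x hxv).1 hadjx.symm
            (hprv x hxv).2 (by omega)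
        refine ⟨x, hdx, ?_⟩
        rw [hχstep x hxv, hprx]
        exact hfx
  -- global assembly
  have hlev : ∀ u, G.dist w (χ u) = G.dist v u := fun u => ((key _).1 u rfl).1
  have hRχ : ∀ u, R u (χ u) := fun u => ((key _).1 u rfl).2.1
  have hcompat : ∀ u, u ≠ v → G.Adj (χ (pr v u)) (χ u) ∧ pr w (χ u) = χ (pr v u) :=
    fun u hu => ((key _).1 u rfl).2.2 hu
  have hinj : Function.Injective χ := by
    intro u₁ u₂ h
    have : G.dist v u₁ = G.dist v u₂ := by
      rw [← hlev u₁, ← hlev u₂, h]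
    exact (key (G.dist v u₁)).2.1 u₁ u₂ rfl this.symm h
  have hsurj : Function.Surjective χ := by
    intro y
    obtain ⟨u, _, hu⟩ := (key (G.dist w y)).2.2 y rfl
    exact ⟨u, hu⟩
  -- adjacency preservation, forward
  have hfwd : ∀ a b, G.Adj a b → G.Adj (χ a) (χ b) := by
    have main : ∀ a b, G.Adj a b → G.dist v b = G.dist v a + 1 → G.Adj (χ a) (χ b) := by
      intro a b hab hd
      have hbv : b ≠ v := fun h => by rw [h, SimpleGraph.dist_self] at hd; omega
      have hpa : pr v b = a :=
        tree_parent_unique hT v b (pr v b) a (hprv b hbv).1 hab.symm (hprv b hbv).2 (by omega)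
      have := (hcompat b hbv).1
      rwa [hpa] at this
    intro a b hab
    rcases tree_level_adj hT v a b hab with h | h
    · exact main a b hab h
    · exact (main b a hab.symm (by omega)).symm
  -- adjacency preservation, backward
  have hbwd : ∀ a b, G.Adj (χ a) (χ b) → G.Adj a b := by
    have main : ∀ a b, G.Adj (χ a) (χ b) → G.dist w (χ b) = G.dist w (χ a) + 1 → G.Adj a b := by
      intro a b hab hd
      have hbv : b ≠ v := by
        intro h
        rw [h, hχv, SimpleGraph.dist_self] at hd
        omega
      have hχbw : χ b ≠ w := fun h => by rw [h, SimpleGraph.dist_self] at hd; omega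
      have hpb : pr w (χ b) = χ a :=
        tree_parent_unique hT w (χ b) (pr w (χ b)) (χ a) (hprw (χ b) hχbw).1 hab.symm
          (hprw (χ b) hχbw).2 (by omega)
      have : χ a = χ (pr v b) := by
        rw [← hpb, (hcompat b hbv).2]
      have hpab : a = pr v b := hinj this
      rw [hpab]
      exact ((hprv b hbv).1).symm
    intro a b hab
    rcases tree_level_adj hT w (χ a) (χ b) hab with h | h
    · exact main a b hab h
    · exact (main b a hab.symm (by omega)).symm
  refine ⟨⟨Equiv.ofBijective χ ⟨hinj, hsurj⟩, ?_⟩, hχv, hRχ⟩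
  intro a b
  exact ⟨hbwd a b, hfwd a b⟩


end NRTreeAux

/-- For a tree with countable valences, a cocompact group action by graph automorphisms and an
invariant initial decoration `R0`, the stable neighbor refinement `R = R_s` identifies two
vertices exactly when some decoration-preserving automorphism carries one to the other; the
automorphism may equivalently be required to preserve the initial decoration `R0` or the stable
decoration `R`. -/
theorem neighbor_refinement_gives_aut_orbits
    {V : Type*} (G : SimpleGraph V) (hT : G.IsTree)
    (hcount : ∀ v : V, (G.neighborSet v).Countable)
    {Γ : Type*} [Group Γ] [MulAction Γ V]
    (hact : ∀ (g : Γ) (u v : V), G.Adj u v → G.Adj (g • u) (g • v))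
    (hfin : Finite (Quotient (MulAction.orbitRel Γ V)))
    (R0 : V → V → Prop) (hR0 : Equivalence R0)
    (hinv : ∀ (g : Γ) (v : V), R0 v (g • v))
    (s : ℕ)
    (hs : ∀ i : ℕ, s ≤ i → ∀ v w : V,
      nbhdRefine G R0 i v w ↔ nbhdRefine G R0 s v w) :
    ∀ v w : V,
      (nbhdRefine G R0 s v w ↔ ∃ χ : G ≃g G, χ v = w ∧ ∀ u : V, R0 u (χ u)) ∧
      (nbhdRefine G R0 s v w ↔
        ∃ χ : G ≃g G, χ v = w ∧ ∀ u : V, nbhdRefine G R0 s u (χ u)) := by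
  intro v w
  have hRs : Equivalence (nbhdRefine G R0 s) := NRTreeAux.nbhdRefine_equivalence hR0 s
  have hstable : ∀ a b, nbhdRefine G R0 s a b → ∀ u,
      {x | G.Adj a x ∧ nbhdRefine G R0 s x u}.encard =
      {x | G.Adj b x ∧ nbhdRefine G R0 s x u}.encard := by
    intro a b hab u
    exact ((hs (s+1) (Nat.le_succ s) a b).mpr hab).2 u
  constructor
  · constructor
    · intro h
      obtain ⟨χ, hχv, hχR⟩ := NRTreeAux.exists_aut hT hcount hRs hstable h
      exact ⟨χ, hχv, fun u => NRTreeAux.nbhdRefine_to_R0 (hχR u)⟩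
    · rintro ⟨χ, hχv, hχR⟩
      have := NRTreeAux.nbhdRefine_aut hR0 χ hχR s v
      rwa [hχv] at this
  · constructor
    · intro h
      exact NRTreeAux.exists_aut hT hcount hRs hstable h
    · rintro ⟨χ, hχv, hχR⟩
      have := hχR v
      rwa [hχv] at this
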